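/- Equip ℝ^{n+2}, with coordinates (x₀,…,x_{n+1}), with the Minkowski bilinear form ⟪x,y⟫ = −x₀y₀ + x₁y₁ + ⋯ + x_{n+1}y_{n+1}, and let H^{n+1} = {x : ⟪x,x⟫ = −1, x₀ > 0}; let Hⁿ = {x ∈ H^{n+1} : x_{n+1} = 0}. Let A₁,…,A_{n+2} ∈ Hⁿ be in general position and α₁,…,α_{n+2} nonzero reals with Σᵢ αᵢAᵢ = 0 (as vectors of ℝ^{n+2}). Suppose B₁,…,B_{n+2} ∈ H^{n+1} satisfy the tensegrity constraints of G_{n,1}: ⟪Bᵢ−B_j, Bᵢ−B_j⟫ ≤ ⟪Aᵢ−A_j, Aᵢ−A_j⟫ whenever αᵢα_j < 0, and ⟪Bᵢ−B_j, Bᵢ−B_j⟫ ≥ ⟪Aᵢ−A_j, Aᵢ−A_j⟫ whenever αᵢα_j > 0. Then ⟪Bᵢ−B_j, Bᵢ−B_j⟫ = ⟪Aᵢ−A_j, Aᵢ−A_j⟫ for all i, j; i.e. G_{n,1} is globally rigid in hyperbolic space H^{n+1}. -/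

import Mathlib

/-- The Minkowski bilinear form on `ℝ^{m+1}` with coordinates `(x₀, …, x_m)`:
`⟪x,y⟫ = −x₀y₀ + x₁y₁ + ⋯ + x_m y_m`. -/
def mink {m : ℕ} (x y : Fin (m + 1) → ℝ) : ℝ :=
  ∑ i, (if i = 0 then -(x i * y i) else x i * y i)

/-- The hyperboloid model of hyperbolic space: `⟪x,x⟫ = −1` and `x₀ > 0`. -/
def InHyperbolic {m : ℕ} (x : Fin (m + 1) → ℝ) : Prop :=
  mink x x = -1 ∧ 0 < x 0

lemma mink_expand {m : ℕ} (x y : Fin (m + 1) → ℝ) :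
    mink x y = -(x 0 * y 0) + ∑ i : Fin m, x i.succ * y i.succ := by
  rw [mink, Fin.sum_univ_succ]
  simp [Fin.succ_ne_zero]

lemma mink_comm {m : ℕ} (x y : Fin (m + 1) → ℝ) : mink x y = mink y x := by
  unfold mink
  exact Finset.sum_congr rfl fun i _ => by split <;> ring

lemma mink_sub_sub {m : ℕ} (x y : Fin (m + 1) → ℝ) :
    mink (x - y) (x - y) = mink x x + mink y y - 2 * mink x y := by
  have h : (∑ i : Fin m, (x i.succ - y i.succ) * (x i.succ - y i.succ))
      = (∑ i : Fin m, x i.succ * x i.succ) + (∑ i : Fin m, y i.succ * y i.succ)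
        - 2 * ∑ i : Fin m, x i.succ * y i.succ := by
    rw [Finset.mul_sum, ← Finset.sum_add_distrib, ← Finset.sum_sub_distrib]
    exact Finset.sum_congr rfl fun i _ => by ring
  simp only [mink_expand, Pi.sub_apply, h]
  ring

lemma mink_zero_left {m : ℕ} (y : Fin (m + 1) → ℝ) : mink 0 y = 0 := by
  simp [mink]

lemma mink_sum_left {m N : ℕ} (c : Fin N → ℝ) (f : Fin N → (Fin (m + 1) → ℝ))
    (y : Fin (m + 1) → ℝ) :
    mink (∑ i, c i • f i) y = ∑ i, c i * mink (f i) y := by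
  simp only [mink_expand, Finset.sum_apply, Pi.smul_apply, smul_eq_mul, mul_add, mul_neg,
    Finset.mul_sum, Finset.sum_add_distrib, Finset.sum_neg_distrib, Finset.sum_mul]
  rw [Finset.sum_comm]
  ring_nf
  have hc : ∀ x, y 0 * c x * f x 0 = c x * f x 0 * y 0 := fun x => by ring
  simp only [hc]
  ring

/-- If `u` and `v` are timelike and `v₀ > 0`, the sign of `mink u v` is the
opposite of the sign of `u₀`. -/
lemma timelike_sign {m : ℕ} (u v : Fin (m + 1) → ℝ)
    (hu : mink u u < 0) (hv : mink v v < 0) (hv0 : 0 < v 0) :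
    (0 < u 0 → mink u v < 0) ∧ (u 0 < 0 → 0 < mink u v) := by
  set su := ∑ i : Fin m, u i.succ * u i.succ with hsu
  set sv := ∑ i : Fin m, v i.succ * v i.succ with hsv
  set suv := ∑ i : Fin m, u i.succ * v i.succ with hsuv
  have hsu' : su < u 0 * u 0 := by
    have := mink_expand u u; rw [← hsu] at this; linarith
  have hsv' : sv < v 0 * v 0 := by
    have := mink_expand v v; rw [← hsv] at this; linarith
  have hsu0 : 0 ≤ su := Finset.sum_nonneg fun i _ => mul_self_nonneg _
  have hsv0 : 0 ≤ sv := Finset.sum_nonneg fun i _ => mul_self_nonneg _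
  have hcs : suv ^ 2 ≤ su * sv := by
    have := Finset.sum_mul_sq_le_sq_mul_sq Finset.univ (fun i : Fin m => u i.succ)
      (fun i : Fin m => v i.succ)
    simpa [hsu, hsv, hsuv, pow_two] using this
  have he : mink u v = -(u 0 * v 0) + suv := by rw [mink_expand, hsuv]
  constructor
  · intro hu0
    rw [he]
    nlinarith [sq_nonneg (suv - u 0 * v 0), sq_nonneg (suv + u 0 * v 0), mul_pos hu0 hv0]
  · intro hu0
    rw [he]
    nlinarith [sq_nonneg (suv - u 0 * v 0), sq_nonneg (suv + u 0 * v 0),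
      mul_pos_of_neg_of_neg hu0 (neg_neg_iff_pos.mpr hv0)]

/-- The framework `G_{n,1}` is globally rigid in `H^{n+1}`: if points `B₁, …, B_{n+2}` on the
hyperboloid `H^{n+1} ⊂ ℝ^{n+2}` satisfy the cable-strut constraints determined by the signs
of `αᵢα_j`, then all the Minkowski squared distances (equivalently, all the hyperbolic
distances) are preserved. -/
theorem G_n1_globally_rigid_hyperbolic {n : ℕ}
    (A : Fin (n + 2) → (Fin (n + 2) → ℝ))
    (hA : ∀ i, InHyperbolic (A i))
    (hAplane : ∀ i, A i (Fin.last (n + 1)) = 0)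
    (hgp : ∀ s : Finset (Fin (n + 2)), s.card = n + 1 →
      LinearIndependent ℝ (fun i : ↥s => A i.1))
    (α : Fin (n + 2) → ℝ) (hα : ∀ i, α i ≠ 0)
    (hsum : ∑ i, α i • A i = 0)
    (B : Fin (n + 2) → (Fin (n + 2) → ℝ))
    (hB : ∀ i, InHyperbolic (B i))
    (hcable : ∀ i j, α i * α j < 0 →
      mink (B i - B j) (B i - B j) ≤ mink (A i - A j) (A i - A j))
    (hstrut : ∀ i j, 0 < α i * α j →
      mink (A i - A j) (A i - A j) ≤ mink (B i - B j) (B i - B j)) :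
    ∀ i j, mink (B i - B j) (B i - B j) = mink (A i - A j) (A i - A j) := by
  have hmA : ∀ i, mink (A i) (A i) = -1 := fun i => (hA i).1
  have hmB : ∀ i, mink (B i) (B i) = -1 := fun i => (hB i).1
  have hA0 : ∀ i, 0 < A i 0 := fun i => (hA i).2
  -- the αᵢ take both signs
  have hsum0 : ∑ i, α i * A i 0 = 0 := by
    have h := congrFun hsum 0
    simpa [Finset.sum_apply] using h
  have hexpos : ∃ i, 0 < α i := by
    by_contra h
    push_neg at h
    have hneg : ∀ i, α i < 0 := fun i => lt_of_le_of_ne (h i) (hα i)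
    have : ∑ i, α i * A i 0 < 0 := by
      have : (0:ℝ) < ∑ i, -(α i * A i 0) :=
        Finset.sum_pos (fun i _ => by nlinarith [hneg i, hA0 i]) Finset.univ_nonempty
      rw [Finset.sum_neg_distrib] at this
      linarith
    linarith
  have hexneg : ∃ i, α i < 0 := by
    by_contra h
    push_neg at h
    have hpos : ∀ i, 0 < α i := fun i => lt_of_le_of_ne (h i) (Ne.symm (hα i))
    have : (0:ℝ) < ∑ i, α i * A i 0 :=
      Finset.sum_pos (fun i _ => mul_pos (hpos i) (hA0 i)) Finset.univ_nonempty
    linarith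
  -- the basic stress inequality, for every pair
  have key1 : ∀ i j, α i * α j * (mink (B i) (B j) - mink (A i) (A j)) ≤ 0 := by
    intro i j
    have eB := mink_sub_sub (B i) (B j)
    have eA := mink_sub_sub (A i) (A j)
    rw [hmB i, hmB j] at eB
    rw [hmA i, hmA j] at eA
    rcases lt_trichotomy (α i * α j) 0 with h | h | h
    · have hc := hcable i j h
      nlinarith
    · exact absurd h (mul_ne_zero (hα i) (hα j))
    · have hc := hstrut i j h
      nlinarith
  set W : Fin (n + 2) → ℝ := ∑ i, α i • B i with hW
  have hmAk : ∀ k, ∑ i, α i * mink (A i) (A k) = 0 := by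
    intro k
    have : mink (∑ i, α i • A i) (A k) = 0 := by rw [hsum]; exact mink_zero_left _
    rw [mink_sum_left] at this
    exact this
  have hWk : ∀ k, α k * mink W (B k)
      = ∑ i, α i * α k * (mink (B i) (B k) - mink (A i) (A k)) := by
    intro k
    have h1 : mink W (B k) = ∑ i, α i * mink (B i) (B k) := by
      rw [hW, mink_sum_left]
    have h2 : ∑ i, α i * α k * (mink (B i) (B k) - mink (A i) (A k))
        = (∑ i, α k * (α i * mink (B i) (B k))) - α k * ∑ i, α i * mink (A i) (A k) := by
      rw [Finset.mul_sum, ← Finset.sum_sub_distrib]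
      exact Finset.sum_congr rfl fun i _ => by ring
    rw [h1, Finset.mul_sum, h2, hmAk k, mul_zero, sub_zero]
  have hWknp : ∀ k, α k * mink W (B k) ≤ 0 := fun k =>
    (hWk k) ▸ Finset.sum_nonpos (fun i _ => key1 i k)
  have hWW : mink W W = ∑ k, α k * mink W (B k) := by
    conv_lhs => rw [hW, mink_sum_left]
    exact Finset.sum_congr rfl fun k _ => by rw [mink_comm]
  have hWWle : mink W W ≤ 0 := hWW ▸ Finset.sum_nonpos (fun k _ => hWknp k)
  -- W cannot be timelike
  have hWWnlt : ¬ mink W W < 0 := by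
    intro hlt
    rcases lt_trichotomy (W 0) 0 with h0 | h0 | h0
    · obtain ⟨k, hk⟩ := hexpos
      have hs := (timelike_sign W (B k) hlt (by rw [hmB k]; norm_num) (hB k).2).2 h0
      nlinarith [hWknp k]
    · have he := mink_expand W W
      rw [h0] at he
      have : (0:ℝ) ≤ ∑ i : Fin (n + 1), W i.succ * W i.succ :=
        Finset.sum_nonneg fun i _ => mul_self_nonneg _
      rw [he] at hlt
      linarith
    · obtain ⟨k, hk⟩ := hexneg
      have hs := (timelike_sign W (B k) hlt (by rw [hmB k]; norm_num) (hB k).2).1 h0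
      nlinarith [hWknp k]
  have hWW0 : mink W W = 0 := le_antisymm hWWle (not_lt.1 hWWnlt)
  -- hence every stress term vanishes
  have hterm : ∀ k, α k * mink W (B k) = 0 := by
    have hz : ∑ k, α k * mink W (B k) = 0 := by rw [← hWW, hWW0]
    intro k
    exact (Finset.sum_eq_zero_iff_of_nonpos (fun k _ => hWknp k)).1 hz k (Finset.mem_univ k)
  have hpair : ∀ i j, mink (B i) (B j) = mink (A i) (A j) := by
    intro i j
    have hz : ∑ i', α i' * α j * (mink (B i') (B j) - mink (A i') (A j)) = 0 := by
      rw [← hWk j]; exact hterm j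
    have := (Finset.sum_eq_zero_iff_of_nonpos (fun i' _ => key1 i' j)).1 hz i
      (Finset.mem_univ i)
    have hne : α i * α j ≠ 0 := mul_ne_zero (hα i) (hα j)
    have : mink (B i) (B j) - mink (A i) (A j) = 0 := by
      rcases mul_eq_zero.1 this with h | h
      · exact absurd h hne
      · exact h
    linarith
  intro i j
  rw [mink_sub_sub, mink_sub_sub, hmA i, hmA j, hmB i, hmB j, hpair i j]
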